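/- In a TDAG whose vertices are topologically ordered, a set S = {(a_1,b_1),...,(a_k,b_k)} of edges sorted so that a_1 ≤ a_2 ≤ ... ≤ a_k in topological order is serial (contained in a simple s-t path) if and only if there exist directed paths from s to a_1, from b_i to a_{i+1} for each i < k, and from b_k to t. -/

import Mathlib

variable {V : Type*}

/-- `p` is a simple directed path in the edge relation `E`. -/
def IsDiPath (E : V → V → Prop) (p : List V) : Prop := p.Chain' E ∧ p.Nodup

/-- `p` is a simple directed path from `x` to `y`. -/
def PathFrom (E : V → V → Prop) (p : List V) (x y : V) : Prop :=
  IsDiPath E p ∧ p.head? = some x ∧ p.getLast? = some y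

/-- the edge `(a,b)` is traversed by the path `p`. -/
def EdgeOn (a b : V) (p : List V) : Prop := (a, b) ∈ p.zip p.tail

/-- directed reachability. -/
def Reach (E : V → V → Prop) : V → V → Prop := Relation.ReflTransGen E

/-- no directed cycles. -/
def Acyclic (E : V → V → Prop) : Prop := ∀ a b, E a b → ¬ Reach E b a

/-- 2-terminal graph (edge version): no self-loops, some `s`-`t` path exists and
every edge lies on a simple `s`-`t` path. -/
def TwoTerminalE (E : V → V → Prop) (s t : V) : Prop :=
  (∀ v, ¬ E v v) ∧ (∃ p, PathFrom E p s t) ∧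
  ∀ a b, E a b → ∃ p, PathFrom E p s t ∧ EdgeOn a b p

/-- 2-terminal graph (full version): no self-loops and every vertex and edge
lies on a simple `s`-`t` path. -/
def TwoTerminalF (E : V → V → Prop) (s t : V) : Prop :=
  (∀ v, ¬ E v v) ∧ (∀ v, ∃ p, PathFrom E p s t ∧ v ∈ p) ∧
  ∀ a b, E a b → ∃ p, PathFrom E p s t ∧ EdgeOn a b p

/-- `C` is an `s`-`t` edge cut. -/
def IsCut (E : V → V → Prop) (s t : V) (C : Set (V × V)) : Prop :=
  (∀ e ∈ C, E e.1 e.2) ∧ ¬ ∃ p, PathFrom (fun a b => E a b ∧ (a, b) ∉ C) p s t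

def IsMinCut (E : V → V → Prop) (s t : V) (C : Set (V × V)) : Prop :=
  IsCut E s t C ∧ ∀ C' ⊂ C, ¬ IsCut E s t C'

/-- `S` is parallel: contained in some minimal `s`-`t` cut. -/
def Parallel (E : V → V → Prop) (s t : V) (S : Set (V × V)) : Prop :=
  ∃ C, IsMinCut E s t C ∧ S ⊆ C

/-- `S` is serial: contained in a simple directed `s`-`t` path. -/
def Serial (E : V → V → Prop) (s t : V) (S : Set (V × V)) : Prop :=
  ∃ p, PathFrom E p s t ∧ ∀ e ∈ S, EdgeOn e.1 e.2 p


section Aux18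
variable {V : Type*} {E : V → V → Prop}

lemma edgeOn_iff_infix18 {a b : V} : ∀ {p : List V}, EdgeOn a b p ↔ [a, b] <:+: p := by
  intro p
  induction p with
  | nil => simp [EdgeOn]
  | cons x xs ih =>
    cases xs with
    | nil =>
      simp only [EdgeOn, List.tail_cons, List.zip_nil_right, List.not_mem_nil, false_iff]
      intro h
      have := h.length_le
      simp at this
    | cons y ys =>
      simp only [EdgeOn, List.tail_cons, List.zip_cons_cons, List.mem_cons, Prod.mk.injEq]
      rw [List.infix_cons_iff, List.cons_prefix_cons]
      constructor
      · rintro (⟨rfl, rfl⟩ | h)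
        · exact Or.inl ⟨rfl, ⟨ys, rfl⟩⟩
        · exact Or.inr (ih.mp h)
      · rintro (⟨rfl, hp⟩ | h)
        · obtain ⟨u, hu⟩ := hp
          obtain ⟨rfl, -⟩ := List.cons.injEq _ _ _ _ ▸ hu
          exact Or.inl ⟨rfl, rfl⟩
        · exact Or.inr (ih.mpr h)

lemma succ_unique18 {l : List V} (h : l.Nodup) {x y z : V}
    (hy : [x, y] <:+: l) (hz : [x, z] <:+: l) : y = z := by
  induction l with
  | nil => simp at hy
  | cons w rest ih =>
    rcases List.infix_cons_iff.mp hy with hy' | hy'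
    · rcases List.infix_cons_iff.mp hz with hz' | hz'
      · rw [List.cons_prefix_cons] at hy' hz'
        obtain ⟨-, u, hu⟩ := hy'
        obtain ⟨-, v, hv⟩ := hz'
        rw [← hv] at hu
        simpa using (List.cons.injEq _ _ _ _ ▸ hu).1
      · exfalso
        rw [List.cons_prefix_cons] at hy'
        obtain ⟨rfl, -⟩ := hy'
        exact (List.nodup_cons.mp h).1 (hz'.subset (by simp))
    · rcases List.infix_cons_iff.mp hz with hz' | hz'
      · exfalso
        rw [List.cons_prefix_cons] at hz'
        obtain ⟨rfl, -⟩ := hz'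
        exact (List.nodup_cons.mp h).1 (hy'.subset (by simp))
      · exact ih (List.nodup_cons.mp h).2 hy' hz'

lemma reach_of_path18 {p : List V} {x y : V} (hc : p.Chain' E)
    (hh : p.head? = some x) (hl : p.getLast? = some y) : Reach E x y := by
  cases p with
  | nil => simp at hh
  | cons z l =>
    obtain rfl : z = x := by simpa using hh
    have hne : (z :: l) ≠ ([] : List V) := by simp
    rw [List.getLast?_eq_getLast hne] at hl
    exact List.relationReflTransGen_of_exists_isChain_cons l hc (by simpa using hl)

lemma path_of_reach18 {x y : V} (h : Reach E x y) :
    ∃ p : List V, p.Chain' E ∧ p.head? = some x ∧ p.getLast? = some y := by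
  obtain ⟨l, hc, hl⟩ := List.exists_isChain_cons_of_relationReflTransGen h
  exact ⟨x :: l, hc, rfl, by rw [List.getLast?_eq_getLast (by simp)]; exact congrArg some hl⟩

lemma reach_head_mem18 : ∀ {p : List V} {x z : V}, p.Chain' E → p.head? = some x → z ∈ p →
    Reach E x z := by
  intro p
  induction p with
  | nil => intro x z _ h; simp at h
  | cons w l ih =>
    intro x z hc hh hm
    obtain rfl : w = x := by simpa using hh
    rcases List.mem_cons.mp hm with rfl | hm
    · exact Relation.ReflTransGen.refl
    · cases l with
      | nil => simp at hm
      | cons w' l' =>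
        obtain ⟨he, hc'⟩ := List.isChain_cons_cons.mp hc
        exact Relation.ReflTransGen.head he (ih hc' rfl hm)

lemma reach_mem_last18 {p : List V} {z y : V} (hc : p.Chain' E)
    (hl : p.getLast? = some y) (hm : z ∈ p) : Reach E z y := by
  obtain ⟨u, v, rfl⟩ := List.append_of_mem hm
  have hsuf : (z :: v) <:+ u ++ z :: v := ⟨u, rfl⟩
  rw [List.getLast?_append] at hl
  have hne : (z :: v).getLast? = some ((z :: v).getLast (by simp)) :=
    List.getLast?_eq_getLast (by simp)
  have hl2 : (z :: v).getLast? = some y := by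
    rw [hne]
    rw [hne] at hl
    simpa using hl
  exact reach_of_path18 (hc.suffix hsuf) rfl hl2

lemma ord_le_reach18 {ord : V → ℕ} (hord : ∀ u v, E u v → ord u < ord v)
    {x y : V} (h : Reach E x y) : ord x ≤ ord y := by
  induction h with
  | refl => exact le_refl _
  | tail _ e ih => exact ih.trans (hord _ _ e).le

lemma eq_of_reach_le18 {ord : V → ℕ} (hord : ∀ u v, E u v → ord u < ord v)
    {x y : V} (h : Reach E x y) (hle : ord y ≤ ord x) : x = y := by
  rcases Relation.ReflTransGen.cases_head h with rfl | ⟨c, hxc, hcy⟩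
  · rfl
  · exact absurd ((hord _ _ hxc).trans_le (ord_le_reach18 hord hcy)) (by omega)

lemma nodup_of_chain18 {ord : V → ℕ} (hord : ∀ u v, E u v → ord u < ord v)
    {l : List V} (h : l.Chain' E) : l.Nodup := by
  have h2 : (l.map ord).Chain' (· < ·) :=
    (List.isChain_map ord).mpr (h.imp fun a b hxy => hord a b hxy)
  have h3 : (l.map ord).Nodup :=
    (List.isChain_iff_pairwise.mp h2).imp ne_of_lt
  exact h3.of_map ord

lemma glue18 {q r : List V} {y : V} (hq : q.Chain' E) (hr : r.Chain' E)
    (hql : q.getLast? = some y) (hrh : r.head? = some y) :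
    ∃ L : List V, L.Chain' E ∧ L.head? = q.head? ∧ L.getLast? = r.getLast? ∧
      q <:+: L ∧ r <:+: L := by
  have hqne : q ≠ [] := by rintro rfl; simp at hql
  have hrne : r ≠ [] := by rintro rfl; simp at hrh
  have hqdec : q = q.dropLast ++ [y] := by
    have h1 := List.dropLast_append_getLast hqne
    rw [List.getLast?_eq_getLast hqne, Option.some_inj] at hql
    rw [hql] at h1
    exact h1.symm
  have hrdec : r = y :: r.tail := by
    cases r with
    | nil => simp at hrh
    | cons c cs =>
      obtain rfl : c = y := by simpa using hrh
      rfl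
  refine ⟨q.dropLast ++ r, ?_, ?_, ?_, ?_, ⟨q.dropLast, [], by simp⟩⟩
  · show List.IsChain E _
    rw [List.isChain_append]
    refine ⟨hq.prefix (List.dropLast_prefix q), hr, ?_⟩
    intro x hx z hz
    have hq2 := hqdec ▸ hq
    have := (List.isChain_append.mp hq2).2.2 x hx y (by simp)
    rw [hrdec] at hz
    obtain rfl : z = y := by simpa using hz.symm
    exact this
  · cases hd : q.dropLast with
    | nil =>
      have hq1 : q = [y] := by rw [hqdec, hd]; rfl
      simp [hd, hq1, hrh]
    | cons c cs =>
      have : q.head? = some c := by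
        rw [hqdec, hd]; rfl
      simp [this]
  · rw [List.getLast?_append]
    rw [List.getLast?_eq_getLast hrne]
    rfl
  · refine (?_ : q <+: q.dropLast ++ r).isInfix
    refine ⟨r.tail, ?_⟩
    rw [hqdec]
    conv_rhs => rw [hrdec]
    simp

end Aux18

/-- In a topologically ordered TDAG, a sorted set of edges `{(aᵢ,bᵢ)}` is serial iff
there are paths `s`–`a₁`, `bᵢ`–`aᵢ₊₁` for each `i < k`, and `b_k`–`t`. -/
theorem stmt18 {V : Type*} (E : V → V → Prop) (s t : V)
    (hG : TwoTerminalE E s t) (hGa : Acyclic E)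
    (ord : V → ℕ) (hord : ∀ u v, E u v → ord u < ord v)
    (k : ℕ) (hk : 0 < k) (a b : Fin k → V)
    (hinj : Function.Injective fun i => (a i, b i))
    (hE : ∀ i, E (a i) (b i))
    (hsorted : ∀ i j : Fin k, i ≤ j → ord (a i) ≤ ord (a j)) :
    Serial E s t {e | ∃ i, e = (a i, b i)} ↔
      (Reach E s (a ⟨0, hk⟩) ∧
        (∀ i : Fin k, ∀ h : i.val + 1 < k, Reach E (b i) (a ⟨i.val + 1, h⟩)) ∧
        Reach E (b ⟨k - 1, by omega⟩) t) := by
  constructor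
  · rintro ⟨p, ⟨⟨hc, hnd⟩, hh, hl⟩, hs⟩
    have hedge : ∀ i : Fin k, [a i, b i] <:+: p := fun i =>
      edgeOn_iff_infix18.mp (hs (a i, b i) ⟨i, rfl⟩)
    refine ⟨?_, ?_, ?_⟩
    · exact reach_head_mem18 hc hh ((hedge ⟨0, hk⟩).subset (by simp))
    · intro i hlt
      have hile : i ≤ (⟨i.val + 1, hlt⟩ : Fin k) := by
        rw [Fin.le_def]; exact Nat.le_succ _
      obtain ⟨u, v, hp⟩ := hedge i
      have hp2 : (u ++ [a i]) ++ (b i :: v) = p := by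
        rw [← hp]; simp
      have hmem : a ⟨i.val + 1, hlt⟩ ∈ (u ++ [a i]) ++ (b i :: v) := by
        rw [hp2]; exact (hedge ⟨i.val + 1, hlt⟩).subset (by simp)
      rcases List.mem_append.mp hmem with hm1 | hm2
      · exfalso
        have hpre : (u ++ [a i]) <+: p := ⟨b i :: v, hp2⟩
        have hr1 : Reach E (a ⟨i.val + 1, hlt⟩) (a i) :=
          reach_mem_last18 (hc.prefix hpre) (by simp [List.getLast?_append]) hm1
        have heq : a ⟨i.val + 1, hlt⟩ = a i :=
          eq_of_reach_le18 hord hr1 (hsorted i ⟨i.val + 1, hlt⟩ hile)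
        have hb : b i = b ⟨i.val + 1, hlt⟩ :=
          succ_unique18 hnd (hedge i) (heq ▸ hedge ⟨i.val + 1, hlt⟩)
        have hii : i = ⟨i.val + 1, hlt⟩ := hinj (by
          show (a i, b i) = (a ⟨i.val + 1, hlt⟩, b ⟨i.val + 1, hlt⟩)
          rw [heq, hb])
        have hv : i.val = i.val + 1 := congrArg Fin.val hii
        omega
      · have hsuf : (b i :: v) <:+ p := ⟨u ++ [a i], hp2⟩
        exact reach_head_mem18 (hc.suffix hsuf) rfl hm2
    · exact reach_mem_last18 hc hl ((hedge ⟨k - 1, by omega⟩).subset (by simp))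
  · rintro ⟨h1, h2, h3⟩
    have key : ∀ m : ℕ, ∀ i : Fin k, k - i.val ≤ m →
        ∃ L : List V, L.Chain' E ∧ L.head? = some (a i) ∧ L.getLast? = some t ∧
          ∀ j : Fin k, i ≤ j → [a j, b j] <:+: L := by
      intro m
      induction m with
      | zero =>
        intro i hi
        exact absurd hi (by have := i.isLt; omega)
      | succ m ih =>
        intro i hi
        by_cases hlt : i.val + 1 < k
        · obtain ⟨L', hc', hh', hl', hcov'⟩ := ih ⟨i.val + 1, hlt⟩
            (by show k - (i.val + 1) ≤ m; have := i.isLt; omega)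
          obtain ⟨r, hrc, hrh, hrl⟩ := path_of_reach18 (h2 i hlt)
          have hpair : List.Chain' E [a i, b i] := List.isChain_pair.mpr (hE i)
          obtain ⟨L1, hc1, hh1, hl1, hinfq, hinfr⟩ := glue18 hpair hrc (by simp) hrh
          obtain ⟨L2, hc2, hh2, hl2, hinf1, hinf2⟩ := glue18 hc1 hc' (hl1.trans hrl) hh'
          refine ⟨L2, hc2, by rw [hh2, hh1]; rfl, hl2.trans hl', ?_⟩
          intro j hj
          rcases eq_or_lt_of_le hj with heq | hlt2
          · rw [← heq]
            exact hinfq.trans hinf1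
          · have hle2 : (⟨i.val + 1, hlt⟩ : Fin k) ≤ j := by
              rw [Fin.le_def]
              show i.val + 1 ≤ j.val
              have := Fin.lt_def.mp hlt2
              omega
            exact (hcov' j hle2).trans hinf2
        · have hieq : i = (⟨k - 1, by omega⟩ : Fin k) := by
            apply Fin.ext
            show i.val = k - 1
            have := i.isLt
            omega
          have hbt : Reach E (b i) t := by rw [hieq]; exact h3
          obtain ⟨r, hrc, hrh, hrl⟩ := path_of_reach18 hbt
          have hpair : List.Chain' E [a i, b i] := List.isChain_pair.mpr (hE i)
          obtain ⟨L1, hc1, hh1, hl1, hinfq, hinfr⟩ := glue18 hpair hrc (by simp) hrh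
          refine ⟨L1, hc1, by rw [hh1]; rfl, hl1.trans hrl, ?_⟩
          intro j hj
          have hji : j = i := by
            apply Fin.ext
            have h1' := Fin.le_def.mp hj
            have h2' := j.isLt
            have h3' : i.val = k - 1 := congrArg Fin.val hieq
            omega
          rw [hji]
          exact hinfq
    obtain ⟨L, hLc, hLh, hLl, hLcov⟩ := key k ⟨0, hk⟩ (by omega)
    obtain ⟨q, hqc, hqh, hql⟩ := path_of_reach18 h1
    obtain ⟨P, hPc, hPh, hPl, hqP, hLP⟩ := glue18 hqc hLc hql hLh
    refine ⟨P, ⟨⟨hPc, nodup_of_chain18 hord hPc⟩, hPh.trans hqh, hPl.trans hLl⟩, ?_⟩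
    rintro e ⟨i, rfl⟩
    exact edgeOn_iff_infix18.mpr ((hLcov i (Fin.le_def.mpr (Nat.zero_le _))).trans hLP)
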